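/- Let k ≥ 2 be an integer and 0 < s_y < R. Let u(s) = arccosh(cosh(s − s_y)·cosh(R)/cosh(s)), B(r) = −∫_r^{∞} dt/(cosh(t)²·sinh(t)^{k−1}), and F(s) = sinh(u(s))^{k−1}·u′(s)·cosh(s − s_y)². Then for every s ∈ (−R, R) with s ≠ s_y, (cosh(s)²/cosh(R)²)·u′(s)² + (B(u(s)) − B(|s − s_y|))·F′(s) ≥ 0. -/

import Mathlib

open MeasureTheory Set


/-- The inverse hyperbolic cosine, `arcosh x = log (x + √(x² - 1))`. -/
noncomputable def arcosh (x : ℝ) : ℝ := Real.log (x + Real.sqrt (x ^ 2 - 1))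

lemma sqrt_sq_sub_one {x : ℝ} (hx : 1 ≤ x) : Real.sqrt (x ^ 2 - 1) ^ 2 = x ^ 2 - 1 := by
  rw [Real.sq_sqrt]; nlinarith

lemma arcosh_inner_pos {x : ℝ} (hx : 1 ≤ x) : 0 < x + Real.sqrt (x ^ 2 - 1) := by
  have := Real.sqrt_nonneg (x ^ 2 - 1); linarith

lemma arcosh_inner_inv {x : ℝ} (hx : 1 ≤ x) :
    (x + Real.sqrt (x ^ 2 - 1))⁻¹ = x - Real.sqrt (x ^ 2 - 1) := by
  have h := sqrt_sq_sub_one hx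
  have hp := arcosh_inner_pos hx
  have hmul : (x + Real.sqrt (x ^ 2 - 1)) * (x - Real.sqrt (x ^ 2 - 1)) = 1 := by nlinarith
  field_simp
  linarith [hmul]

lemma cosh_arcosh {x : ℝ} (hx : 1 ≤ x) : Real.cosh (arcosh x) = x := by
  have hp := arcosh_inner_pos hx
  rw [arcosh, Real.cosh_eq, Real.exp_log hp, ← Real.log_inv, Real.exp_log (by positivity),
    arcosh_inner_inv hx]
  ring

lemma sinh_arcosh {x : ℝ} (hx : 1 ≤ x) : Real.sinh (arcosh x) = Real.sqrt (x ^ 2 - 1) := by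
  have hp := arcosh_inner_pos hx
  rw [arcosh, Real.sinh_eq, Real.exp_log hp, ← Real.log_inv, Real.exp_log (by positivity),
    arcosh_inner_inv hx]
  ring

lemma arcosh_nonneg {x : ℝ} (hx : 1 ≤ x) : 0 ≤ arcosh x := by
  apply Real.log_nonneg
  have := Real.sqrt_nonneg (x ^ 2 - 1); linarith

lemma hasDerivAt_arcosh {x : ℝ} (hx : 1 < x) :
    HasDerivAt arcosh (1 / Real.sqrt (x ^ 2 - 1)) x := by
  have h1 : (0:ℝ) < x ^ 2 - 1 := by nlinarith
  have hw : 0 < Real.sqrt (x ^ 2 - 1) := Real.sqrt_pos.2 h1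
  have hin : HasDerivAt (fun y : ℝ => y ^ 2 - 1) (2 * x) x := by
    simpa using ((hasDerivAt_pow 2 x).sub_const 1)
  have hs : HasDerivAt (fun y : ℝ => Real.sqrt (y ^ 2 - 1))
      (1 / (2 * Real.sqrt (x ^ 2 - 1)) * (2 * x)) x :=
    (Real.hasDerivAt_sqrt (ne_of_gt h1)).comp x hin
  have hsum : HasDerivAt (fun y : ℝ => y + Real.sqrt (y ^ 2 - 1))
      (1 + 1 / (2 * Real.sqrt (x ^ 2 - 1)) * (2 * x)) x := (hasDerivAt_id x).add hs
  have hlog := hsum.log (ne_of_gt (arcosh_inner_pos hx.le))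
  have : arcosh = fun y : ℝ => Real.log (y + Real.sqrt (y ^ 2 - 1)) := rfl
  rw [this]
  convert hlog using 1
  have hp := arcosh_inner_pos hx.le
  field_simp
  ring


lemma f_integrable (k : ℕ) {a : ℝ} (ha : 0 < a) :
    IntegrableOn (fun t : ℝ => 1 / (Real.cosh t ^ 2 * Real.sinh t ^ (k - 1))) (Ioi a) := by
  have hsa : 0 < Real.sinh a := Real.sinh_pos_iff.2 ha
  have hsap : 0 < Real.sinh a ^ (k-1) := pow_pos hsa _
  have hg : IntegrableOn (fun t : ℝ => (4 / Real.sinh a ^ (k-1)) * Real.exp (-2 * t)) (Ioi a) :=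
    (exp_neg_integrableOn_Ioi a two_pos).const_mul _
  apply Integrable.mono hg
  · apply ContinuousOn.aestronglyMeasurable _ measurableSet_Ioi
    apply ContinuousOn.div continuousOn_const
    · fun_prop
    · intro t ht
      have h1 : 0 < Real.sinh t := Real.sinh_pos_iff.2 (ha.trans ht)
      have h2 : 0 < Real.cosh t := Real.cosh_pos (x := t)
      exact ne_of_gt (mul_pos (pow_pos h2 2) (pow_pos h1 _))
  · rw [ae_restrict_iff' measurableSet_Ioi]
    filter_upwards with t ht
    have hst : 0 < Real.sinh t := Real.sinh_pos_iff.2 (ha.trans ht)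
    have hstp : 0 < Real.sinh t ^ (k-1) := pow_pos hst _
    have hct : (0:ℝ) < Real.cosh t := Real.cosh_pos (x := t)
    have hd : 0 < Real.cosh t ^ 2 * Real.sinh t ^ (k-1) :=
      mul_pos (pow_pos hct 2) hstp
    have het : 0 < Real.exp t := Real.exp_pos t
    have he2 : 0 < Real.exp (-2 * t) := Real.exp_pos _
    have h2 : Real.exp t / 2 ≤ Real.cosh t := by
      rw [Real.cosh_eq]; have := Real.exp_pos (-t); linarith
    have hcosh2 : Real.exp t ^ 2 / 4 ≤ Real.cosh t ^ 2 := by nlinarith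
    have hsp' : Real.sinh a ^ (k-1) ≤ Real.sinh t ^ (k-1) :=
      pow_le_pow_left₀ hsa.le (Real.sinh_lt_sinh.2 ht).le _
    rw [Real.norm_eq_abs, Real.norm_eq_abs, abs_of_nonneg (le_of_lt (by positivity)),
      abs_of_nonneg (le_of_lt (mul_pos (by positivity) he2))]
    have hE2 : Real.exp (-(2 * t)) * Real.exp t ^ 2 = 1 := by
      rw [sq, ← Real.exp_add, ← Real.exp_add, show -(2*t) + (t + t) = 0 by ring, Real.exp_zero]
    have key : Real.exp t ^ 2 / 4 * Real.sinh a ^ (k-1)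
        ≤ Real.cosh t ^ 2 * Real.sinh t ^ (k-1) := by
      apply mul_le_mul hcosh2 hsp' hsap.le (by positivity)
    have base : 4 / Real.sinh a ^ (k-1) * Real.exp (-2*t)
        * (Real.exp t ^ 2 / 4 * Real.sinh a ^ (k-1)) = 1 := by
      field_simp
      linear_combination hE2
    rw [div_le_iff₀ hd, ← base]
    have hc : 0 ≤ 4 / Real.sinh a ^ (k-1) * Real.exp (-2*t) := by positivity
    calc 4 / Real.sinh a ^ (k-1) * Real.exp (-2*t)
          * (Real.exp t ^ 2 / 4 * Real.sinh a ^ (k-1))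
        ≤ 4 / Real.sinh a ^ (k-1) * Real.exp (-2*t)
          * (Real.cosh t ^ 2 * Real.sinh t ^ (k-1)) := mul_le_mul_of_nonneg_left key hc
      _ = _ := by ring

lemma B_mono (k : ℕ) {a b : ℝ} (ha : 0 < a) (hab : a ≤ b) :
    (∫ t in Ioi b, 1 / (Real.cosh t ^ 2 * Real.sinh t ^ (k - 1))) ≤
      ∫ t in Ioi a, 1 / (Real.cosh t ^ 2 * Real.sinh t ^ (k - 1)) := by
  apply setIntegral_mono_set (f_integrable k ha)
  · refine Filter.eventually_of_mem (self_mem_ae_restrict measurableSet_Ioi) ?_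
    intro t ht
    have h1 : 0 < Real.sinh t := Real.sinh_pos_iff.2 (ha.trans ht)
    have h2 : (0:ℝ) < Real.cosh t := Real.cosh_pos (x := t)
    positivity
  · exact HasSubset.Subset.eventuallyLE (Ioi_subset_Ioi hab)

lemma sinh_key (sy t : ℝ) :
    Real.sinh (t - sy) * Real.cosh t - Real.cosh (t - sy) * Real.sinh t = -Real.sinh sy := by
  have h := Real.sinh_sub (t - sy) t
  rw [show t - sy - t = -sy by ring, Real.sinh_neg] at h
  linarith

lemma q_hasDerivAt (sy R t : ℝ) :
    HasDerivAt (fun t => Real.cosh (t - sy) * Real.cosh R / Real.cosh t)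
      (-(Real.cosh R * Real.sinh sy) / Real.cosh t ^ 2) t := by
  have hct : Real.cosh t ≠ 0 := ne_of_gt (Real.cosh_pos _)
  have hnum : HasDerivAt (fun t => Real.cosh (t - sy) * Real.cosh R)
      (Real.sinh (t - sy) * 1 * Real.cosh R) t :=
    (((hasDerivAt_id t).sub_const sy).cosh).mul_const _
  have h := hnum.div (Real.hasDerivAt_cosh t) hct
  refine h.congr_deriv ?_
  have key := sinh_key sy t
  rw [div_left_inj' (pow_ne_zero 2 hct)]
  linear_combination Real.cosh R * key

theorem stmt_10 (k : ℕ) (hk : 2 ≤ k) (sy R : ℝ) (hsy : 0 < sy) (hR : sy < R)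
    (u B F : ℝ → ℝ)
    (hu : ∀ s : ℝ, u s = arcosh (Real.cosh (s - sy) * Real.cosh R / Real.cosh s))
    (hB : ∀ r : ℝ, B r = -∫ t in Set.Ioi r, 1 / (Real.cosh t ^ 2 * Real.sinh t ^ (k - 1)))
    (hF : ∀ s : ℝ, F s = Real.sinh (u s) ^ (k - 1) * deriv u s * Real.cosh (s - sy) ^ 2) :
    ∀ s ∈ Set.Ioo (-R) R, s ≠ sy →
      (Real.cosh s ^ 2 / Real.cosh R ^ 2) * (deriv u s) ^ 2 +
        (B (u s) - B |s - sy|) * deriv F s ≥ 0 := by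
  intro s hs hne
  have hR0 : 0 < R := hsy.trans hR
  set q : ℝ → ℝ := fun t => Real.cosh (t - sy) * Real.cosh R / Real.cosh t with hqdef
  set C : ℝ := Real.cosh R * Real.sinh sy with hCdef
  have hC : 0 < C := mul_pos (Real.cosh_pos _) (Real.sinh_pos_iff.2 hsy)
  -- basic facts on Ioo
  have hq1 : ∀ t ∈ Set.Ioo (-R) R, 1 < q t := by
    intro t ht
    have hct : (0:ℝ) < Real.cosh t := Real.cosh_pos _
    have h1 : Real.cosh t < Real.cosh R := by
      rw [Real.cosh_lt_cosh, abs_of_pos hR0]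
      exact abs_lt.2 ⟨ht.1, ht.2⟩
    have h2 : Real.cosh t < Real.cosh (t - sy) * Real.cosh R := by
      nlinarith [Real.one_le_cosh (t - sy)]
    exact (one_lt_div hct).2 h2
  have hueq : u = fun t => arcosh (q t) := funext hu
  -- derivative of u at any point of Ioo
  have hud : ∀ t ∈ Set.Ioo (-R) R,
      HasDerivAt u ((-C / Real.cosh t ^ 2) / Real.sqrt ((q t) ^ 2 - 1)) t := by
    intro t ht
    have h1 := (hasDerivAt_arcosh (hq1 t ht)).comp t (q_hasDerivAt sy R t)
    rw [hueq]
    refine h1.congr_deriv ?_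
    rw [hCdef]
    ring
  have hwpos : ∀ t ∈ Set.Ioo (-R) R, 0 < Real.sqrt ((q t) ^ 2 - 1) := by
    intro t ht
    have := hq1 t ht
    apply Real.sqrt_pos.2
    nlinarith
  have husinh : ∀ t ∈ Set.Ioo (-R) R, Real.sinh (u t) = Real.sqrt ((q t) ^ 2 - 1) := by
    intro t ht
    rw [hu t]
    exact sinh_arcosh (hq1 t ht).le
  -- F agrees with G on Ioo
  set G : ℝ → ℝ := fun t =>
      -C * (Real.sqrt ((q t) ^ 2 - 1) ^ (k - 2) * (Real.cosh (t - sy) / Real.cosh t) ^ 2)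
    with hGdef
  have hFG : ∀ t ∈ Set.Ioo (-R) R, F t = G t := by
    intro t ht
    have hw := hwpos t ht
    have hct : (0:ℝ) < Real.cosh t := Real.cosh_pos _
    have hdu : deriv u t = (-C / Real.cosh t ^ 2) / Real.sqrt ((q t) ^ 2 - 1) :=
      (hud t ht).deriv
    rw [hF t, hdu, husinh t ht, hGdef]
    have hk1 : k - 1 = (k - 2) + 1 := by omega
    rw [hk1, pow_succ]
    field_simp
  -- deriv F = deriv G at s
  have hmem : Set.Ioo (-R) R ∈ nhds s := Ioo_mem_nhds hs.1 hs.2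
  have hdFG : deriv F s = deriv G s :=
    Filter.EventuallyEq.deriv_eq (Filter.eventuallyEq_of_mem hmem hFG)
  -- derivative of G at s
  have hQ1 : 1 < q s := hq1 s hs
  have hw : 0 < Real.sqrt ((q s) ^ 2 - 1) := hwpos s hs
  have hcs : (0:ℝ) < Real.cosh s := Real.cosh_pos _
  have hq2 : (q s) ^ 2 - 1 ≠ 0 := by nlinarith
  have hinner : HasDerivAt (fun t => (q t) ^ 2 - 1)
      (2 * q s ^ 1 * (-C / Real.cosh s ^ 2)) s :=
    ((q_hasDerivAt sy R s).pow 2).sub_const 1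
  have hW : HasDerivAt (fun t => Real.sqrt ((q t) ^ 2 - 1))
      (1 / (2 * Real.sqrt ((q s) ^ 2 - 1)) * (2 * q s ^ 1 * (-C / Real.cosh s ^ 2))) s :=
    (Real.hasDerivAt_sqrt hq2).comp s hinner
  have hWp := hW.pow (k - 2)
  have hr : HasDerivAt (fun t => Real.cosh (t - sy) / Real.cosh t)
      ((Real.sinh (s - sy) * 1 * Real.cosh s - Real.cosh (s - sy) * Real.sinh s) /
        Real.cosh s ^ 2) s :=
    (((hasDerivAt_id s).sub_const sy).cosh).div (Real.hasDerivAt_cosh s) (ne_of_gt hcs)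
  have hP := hr.pow 2
  have hG : HasDerivAt G (-C *
      (((k - 2 : ℕ) : ℝ) * Real.sqrt ((q s) ^ 2 - 1) ^ (k - 2 - 1) *
          (1 / (2 * Real.sqrt ((q s) ^ 2 - 1)) * (2 * q s ^ 1 * (-C / Real.cosh s ^ 2))) *
          (Real.cosh (s - sy) / Real.cosh s) ^ 2 +
        Real.sqrt ((q s) ^ 2 - 1) ^ (k - 2) *
          (2 * (Real.cosh (s - sy) / Real.cosh s) ^ 1 *
            ((Real.sinh (s - sy) * 1 * Real.cosh s - Real.cosh (s - sy) * Real.sinh s) /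
              Real.cosh s ^ 2)))) s :=
    (hWp.mul hP).const_mul (-C)
  -- sign of deriv G
  have hderivG : 0 ≤ deriv G s := by
    rw [hG.deriv]
    have hq' : -C / Real.cosh s ^ 2 < 0 := div_neg_of_neg_of_pos (by linarith) (by positivity)
    have hqpos : 0 < q s := lt_trans one_pos hQ1
    have hT1 : (2 * q s ^ 1 * (-C / Real.cosh s ^ 2)) ≤ 0 := by
      apply le_of_lt
      apply mul_neg_of_pos_of_neg _ hq'
      simpa using hqpos
    have hT1' : 1 / (2 * Real.sqrt ((q s) ^ 2 - 1)) *
        (2 * q s ^ 1 * (-C / Real.cosh s ^ 2)) ≤ 0 :=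
      mul_nonpos_of_nonneg_of_nonpos (by positivity) hT1
    have hWd : ((k - 2 : ℕ) : ℝ) * Real.sqrt ((q s) ^ 2 - 1) ^ (k - 2 - 1) *
        (1 / (2 * Real.sqrt ((q s) ^ 2 - 1)) * (2 * q s ^ 1 * (-C / Real.cosh s ^ 2))) ≤ 0 :=
      mul_nonpos_of_nonneg_of_nonpos (by positivity) hT1'
    have hkey : Real.sinh (s - sy) * 1 * Real.cosh s - Real.cosh (s - sy) * Real.sinh s =
        -Real.sinh sy := by
      have := sinh_key sy s; linarith
    have hPd : 2 * (Real.cosh (s - sy) / Real.cosh s) ^ 1 *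
        ((Real.sinh (s - sy) * 1 * Real.cosh s - Real.cosh (s - sy) * Real.sinh s) /
          Real.cosh s ^ 2) ≤ 0 := by
      apply mul_nonpos_of_nonneg_of_nonpos
      · have h1 : (0:ℝ) < Real.cosh (s - sy) := Real.cosh_pos _
        positivity
      · rw [hkey]
        apply le_of_lt
        apply div_neg_of_neg_of_pos _ (by positivity)
        simpa using Real.sinh_pos_iff.2 hsy
    have hbr : (((k - 2 : ℕ) : ℝ) * Real.sqrt ((q s) ^ 2 - 1) ^ (k - 2 - 1) *
          (1 / (2 * Real.sqrt ((q s) ^ 2 - 1)) * (2 * q s ^ 1 * (-C / Real.cosh s ^ 2))) *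
          (Real.cosh (s - sy) / Real.cosh s) ^ 2 +
        Real.sqrt ((q s) ^ 2 - 1) ^ (k - 2) *
          (2 * (Real.cosh (s - sy) / Real.cosh s) ^ 1 *
            ((Real.sinh (s - sy) * 1 * Real.cosh s - Real.cosh (s - sy) * Real.sinh s) /
              Real.cosh s ^ 2))) ≤ 0 := by
      apply add_nonpos
      · exact mul_nonpos_of_nonpos_of_nonneg hWd (by positivity)
      · exact mul_nonpos_of_nonneg_of_nonpos (by positivity) hPd
    nlinarith [hbr, hC]
  -- B difference nonneg
  have ha0 : 0 < |s - sy| := abs_pos.2 (sub_ne_zero.2 hne)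
  have hcoshR : Real.cosh s ≤ Real.cosh R := by
    rw [Real.cosh_le_cosh, abs_of_pos hR0]
    exact (abs_lt.2 ⟨hs.1, hs.2⟩).le
  have hau : |s - sy| ≤ u s := by
    have h0u : 0 ≤ u s := by rw [hu s]; exact arcosh_nonneg (hq1 s hs).le
    have hcoshu : Real.cosh (u s) = q s := by rw [hu s]; exact cosh_arcosh (hq1 s hs).le
    have hle : Real.cosh |s - sy| ≤ Real.cosh (u s) := by
      rw [Real.cosh_abs, hcoshu, hqdef]
      rw [le_div_iff₀ hcs]
      nlinarith [Real.cosh_pos (s - sy)]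
    rw [Real.cosh_le_cosh, abs_abs, abs_of_nonneg h0u] at hle
    exact hle
  have hBdiff : 0 ≤ B (u s) - B |s - sy| := by
    rw [hB, hB]
    have := B_mono k ha0 hau
    linarith
  have hterm1 : 0 ≤ (Real.cosh s ^ 2 / Real.cosh R ^ 2) * (deriv u s) ^ 2 := by positivity
  rw [ge_iff_le, hdFG]
  have := mul_nonneg hBdiff hderivG
  linarith
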